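/- For all integers N ≥ 1 and i with 1 ≤ i ≤ N, the top-order coefficients satisfy a_{i,N+1−i}(N+1,x) = (−1)^i · i! · S_{1,i−1}(N−i+1) · (x)_{N−i+1}. -/

import Mathlib

open Finset

/-- Generalized Changhee power sums with shifted index: `genChangheeS j N = S_{1,j-1}(N)`,
so that `genChangheeS 0 N = S_{1,-1}(N) = 1`, `genChangheeS 1 N = S_{1,0}(N) = N + 1`,
and `genChangheeS (j+2) N = S_{1,j+1}(N) = ∑_{l=0}^{N} S_{1,j}(l)`. -/
def genChangheeS : ℕ → ℕ → ℚ
  | 0, _ => 1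
  | 1, N => N + 1
  | (j+2), N => ∑ l ∈ Finset.range (N+1), genChangheeS (j+1) l

/-- Falling factorial `(x)_n = x(x-1)⋯(x-n+1)`, with `(x)_0 = 1`. -/
noncomputable def fallingFactorial (x : ℝ) (n : ℕ) : ℝ := ∏ i ∈ Finset.range n, (x - i)

/-- The coefficients `a_{i,j}(N, x)` arising from repeated differentiation of the
λ-Changhee generating function: `a_{0,0}(N,x) = 0`, `a_{1,0}(1,x) = -1`, `a_{0,1}(1,x) = x`,
and for `N ≥ 1`, `i, j ≥ 0` with `1 ≤ i + j ≤ N + 1`,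
`a_{i,j}(N+1,x) = -N·a_{i,j}(N,x) - i·a_{i-1,j}(N,x) + (x - j + 1)·a_{i,j-1}(N,x)`,
with the convention that `a_{i,j}(N,x) = 0` whenever `i < 0`, `j < 0`, or `i + j > N`. -/
noncomputable def aCh : ℕ → ℤ → ℤ → ℝ → ℝ
  | 0, _, _, _ => 0
  | 1, i, j, x => if i = 1 ∧ j = 0 then -1 else if i = 0 ∧ j = 1 then x else 0
  | (N+2), i, j, x =>
      if 0 ≤ i ∧ 0 ≤ j ∧ 1 ≤ i + j ∧ i + j ≤ N + 2 then
        -(N+1 : ℝ) * aCh (N+1) i j x - (i : ℝ) * aCh (N+1) (i-1) j x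
          + (x - (j : ℝ) + 1) * aCh (N+1) i (j-1) x
      else 0

lemma genChangheeS_zero_right : ∀ j, genChangheeS j 0 = 1
  | 0 => rfl
  | 1 => by norm_num [genChangheeS]
  | (j+2) => by
      rw [genChangheeS]
      simpa using genChangheeS_zero_right (j+1)

lemma genChangheeS_succ (k M : ℕ) :
    genChangheeS (k+1) (M+1) = genChangheeS (k+1) M + genChangheeS k (M+1) := by
  cases k with
  | zero => simp [genChangheeS]
  | succ k => rw [genChangheeS, genChangheeS, Finset.sum_range_succ]

lemma fallingFactorial_succ (x : ℝ) (n : ℕ) :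
    fallingFactorial x (n+1) = fallingFactorial x n * (x - n) :=
  Finset.prod_range_succ _ _

lemma aCh_zero (M : ℕ) (i j : ℤ) (x : ℝ) (h : i < 0 ∨ j < 0 ∨ (M:ℤ) < i + j) :
    aCh M i j x = 0 := by
  match M with
  | 0 => rfl
  | 1 =>
    simp only [aCh]
    rw [if_neg, if_neg] <;> norm_num at h ⊢ <;> omega
  | (N+2) =>
    rw [aCh, if_neg]
    push_cast at h
    omega

lemma aCh_rec (N : ℕ) (i j : ℤ) (x : ℝ)
    (h : 0 ≤ i ∧ 0 ≤ j ∧ 1 ≤ i + j ∧ i + j ≤ (N:ℤ) + 2) :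
    aCh (N+2) i j x = -((N:ℝ)+1) * aCh (N+1) i j x - (i:ℝ) * aCh (N+1) (i-1) j x
      + (x - (j:ℝ) + 1) * aCh (N+1) i (j-1) x := by
  rw [aCh, if_pos h]

lemma aCh_diag : ∀ (N i : ℕ), i ≤ N + 2 → ∀ x : ℝ,
    aCh (N + 2) (i : ℤ) (((N+1:ℕ) : ℤ) + 1 - (i : ℤ)) x
      = (-1 : ℝ) ^ i * (Nat.factorial i : ℝ) * ((genChangheeS i (N + 2 - i) : ℚ) : ℝ) *
          fallingFactorial x (N + 2 - i) := by
  intro N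
  induction N with
  | zero =>
    intro i hi x
    interval_cases i <;>
      norm_num [aCh, genChangheeS, fallingFactorial, Finset.prod_range_succ,
        Finset.sum_range_succ, Nat.factorial] <;> ring
  | succ N ih =>
    intro i hi x
    rw [aCh_rec (N+1) (i:ℤ) (((N+1+1:ℕ):ℤ) + 1 - (i:ℤ)) x (by omega)]
    rw [aCh_zero (N+2) (i:ℤ) _ x (Or.inr (Or.inr (by push_cast; omega)))]
    match i, hi with
    | 0, _ =>
      rw [show ((N+1+1:ℕ):ℤ) + 1 - ((0:ℕ):ℤ) - 1 = ((N+1:ℕ):ℤ) + 1 - ((0:ℕ):ℤ) by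
        push_cast; ring]
      rw [ih 0 (by omega) x]
      rw [show N+1+2-0 = (N+2-0)+1 by omega]
      rw [show fallingFactorial x ((N+2-0)+1)
            = fallingFactorial x (N+2-0) * (x - ((N+2-0:ℕ):ℝ)) from fallingFactorial_succ x _]
      simp only [show ∀ M, genChangheeS 0 M = (1:ℚ) from fun _ => rfl, Nat.sub_zero]
      push_cast
      ring
    | (k+1), hi =>
      rcases Nat.lt_or_ge k (N+2) with hk | hk
      · -- k ≤ N+1 : generic case
        obtain ⟨m, hm⟩ : ∃ m, N + 1 = k + m := ⟨N+1-k, by omega⟩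
        rw [show ((N+1+1:ℕ):ℤ) + 1 - ((k+1:ℕ):ℤ) - 1 = ((N+1:ℕ):ℤ) + 1 - ((k+1:ℕ):ℤ) by
          push_cast; ring]
        rw [show ((N+1+1:ℕ):ℤ) + 1 - ((k+1:ℕ):ℤ) = ((N+1:ℕ):ℤ) + 1 - ((k:ℕ):ℤ) by
          push_cast; ring]
        rw [show ((k+1:ℕ):ℤ) - 1 = ((k:ℕ):ℤ) by push_cast; ring]
        rw [ih k (by omega) x, ih (k+1) (by omega) x]
        rw [show N+1+2-(k+1) = m+1 by omega, show N+2-k = m+1 by omega,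
          show N+2-(k+1) = m by omega]
        rw [genChangheeS_succ k m]
        rw [show fallingFactorial x (m+1)
            = fallingFactorial x m * (x - (m:ℝ)) from fallingFactorial_succ x m]
        rw [hm]
        push_cast [Nat.factorial_succ, pow_succ]
        ring
      · -- i = N+3 : corner case
        have hk3 : k = N + 2 := by omega
        subst hk3
        rw [show (((N+1+1:ℕ)):ℤ) + 1 - ((N+2+1:ℕ):ℤ) - 1 = (-1 : ℤ) by push_cast; ring]
        rw [aCh_zero (N+2) _ (-1) x (Or.inr (Or.inl (by omega)))]
        rw [show ((N+1+1:ℕ):ℤ) + 1 - ((N+2+1:ℕ):ℤ) = ((N+1:ℕ):ℤ) + 1 - ((N+2:ℕ):ℤ) by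
          push_cast; ring]
        rw [show ((N+2+1:ℕ):ℤ) - 1 = ((N+2:ℕ):ℤ) by push_cast; ring]
        rw [ih (N+2) le_rfl x]
        rw [show N+2-(N+2) = 0 by omega, show N+1+2-(N+2+1) = 0 by omega,
          genChangheeS_zero_right, genChangheeS_zero_right]
        have ff0 : fallingFactorial x 0 = 1 := Finset.prod_range_zero _
        rw [ff0]
        push_cast [Nat.factorial_succ, pow_succ]
        ring

/-- Top-order coefficients: `a_{i,N+1-i}(N+1,x) = (-1)^i · i! · S_{1,i-1}(N-i+1) · (x)_{N-i+1}`
for `1 ≤ i ≤ N`. -/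
theorem aCh_top_order (N i : ℕ) (hN : 1 ≤ N) (hi1 : 1 ≤ i) (hi2 : i ≤ N) (x : ℝ) :
    aCh (N + 1) (i : ℤ) ((N : ℤ) + 1 - (i : ℤ)) x
      = (-1 : ℝ) ^ i * (Nat.factorial i : ℝ) * (genChangheeS i (N - i + 1) : ℝ) *
          fallingFactorial x (N - i + 1) := by
  obtain ⟨M, rfl⟩ : ∃ M, N = M + 1 := ⟨N - 1, by omega⟩
  have h := aCh_diag M i (by omega) x
  rw [show M + 1 - i + 1 = M + 2 - i by omega]
  exact h
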